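/- Let (e_n) be a seminormalized quasisubsymmetric basic sequence in a Banach space X. Then there exists a constant S > 0 such that for any two strictly increasing sequences (k_n) and (ℓ_n) of positive integers with k_n ≤ ℓ_n for all n, one has ‖Σ a_n e_{ℓ_n}‖ ≤ S‖Σ a_n e_{k_n}‖ for all finitely supported scalar sequences (a_n). -/
import Mathlib


open Filter Topology

section Defs

variable {X : Type*} [NormedAddCommGroup X] [NormedSpace ℝ X]

/-- A sequence `(e n)` in a normed space is *seminormalized* if
`0 < inf_n ‖e n‖` and `sup_n ‖e n‖ < ∞`. -/
def Seminormalized (e : ℕ → X) : Prop :=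
  ∃ d D : ℝ, 0 < d ∧ ∀ n, d ≤ ‖e n‖ ∧ ‖e n‖ ≤ D

/-- `(e n)` is a *basic sequence*: each `e n` is nonzero and there is a basis
constant `B ≥ 1` such that `‖∑_{n<m} a n • e n‖ ≤ B * ‖∑_{n<M} a n • e n‖`
for all `m ≤ M` and all scalars. -/
def IsBasicSeq (e : ℕ → X) : Prop :=
  (∀ n, e n ≠ 0) ∧ ∃ B : ℝ, 1 ≤ B ∧ ∀ (a : ℕ → ℝ) (m M : ℕ), m ≤ M →
    ‖∑ n ∈ Finset.range m, a n • e n‖ ≤ B * ‖∑ n ∈ Finset.range M, a n • e n‖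

/-- `(x n)` *dominates* `(y n)`: there is `C > 0` with
`‖∑ a n • y n‖ ≤ C * ‖∑ a n • x n‖` for all finitely supported scalars. -/
def Dominates (x y : ℕ → X) : Prop :=
  ∃ C : ℝ, 0 < C ∧ ∀ (a : ℕ → ℝ) (F : Finset ℕ),
    ‖∑ n ∈ F, a n • y n‖ ≤ C * ‖∑ n ∈ F, a n • x n‖

/-- `(e n)` is *quasisubsymmetric*: for any two strictly increasing sequences
`k`, `l` of indices with `k n ≤ l n` for all `n`, `(e (k n))` dominates `(e (l n))`. -/
def QuasiSubsymmetric (e : ℕ → X) : Prop :=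
  ∀ k l : ℕ → ℕ, StrictMono k → StrictMono l → (∀ n, k n ≤ l n) →
    Dominates (fun n => e (k n)) (fun n => e (l n))

/-- `(e n)` is an *unconditional basic sequence*. -/
def IsUncondBasicSeq (e : ℕ → X) : Prop :=
  IsBasicSeq e ∧ ∃ K : ℝ, ∀ (a ε : ℕ → ℝ), (∀ n, ε n = 1 ∨ ε n = -1) →
    ∀ F : Finset ℕ, ‖∑ n ∈ F, (ε n * a n) • e n‖ ≤ K * ‖∑ n ∈ F, a n • e n‖

/-- `(e n)` is a *Schauder basis* of `X`: every `x ∈ X` has a unique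
representation `x = ∑ n, a n • e n` (convergence of partial sums in order). -/
def IsSchauderBasis (e : ℕ → X) : Prop :=
  ∀ x : X, ∃! a : ℕ → ℝ,
    Tendsto (fun M => ∑ n ∈ Finset.range M, a n • e n) atTop (𝓝 x)

/-- `(e n)` is equivalent to the unit vector basis of `ℓ¹`. -/
def EquivL1Basis (e : ℕ → X) : Prop :=
  ∃ c C : ℝ, 0 < c ∧ ∀ (a : ℕ → ℝ) (F : Finset ℕ),
    c * ∑ n ∈ F, |a n| ≤ ‖∑ n ∈ F, a n • e n‖ ∧
      ‖∑ n ∈ F, a n • e n‖ ≤ C * ∑ n ∈ F, |a n|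

end Defs

section Aux2
variable {X : Type*} [NormedAddCommGroup X] [NormedSpace ℝ X]

lemma coeff_bound (e : ℕ → X) (d B : ℝ) (hd : 0 < d) (hde : ∀ n, d ≤ ‖e n‖)
    (hB : ∀ (a : ℕ → ℝ) (m M : ℕ), m ≤ M →
      ‖∑ n ∈ Finset.range m, a n • e n‖ ≤ B * ‖∑ n ∈ Finset.range M, a n • e n‖)
    (b : ℕ → ℝ) (M p : ℕ) (hp : p < M) :
    |b p| * d ≤ 2 * B * ‖∑ n ∈ Finset.range M, b n • e n‖ := by
  have h1 := hB b (p + 1) M hp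
  have h2 := hB b p M hp.le
  have key : b p • e p =
      (∑ n ∈ Finset.range (p + 1), b n • e n) - ∑ n ∈ Finset.range p, b n • e n := by
    rw [Finset.sum_range_succ]; abel
  have h3 : ‖b p • e p‖ ≤ 2 * B * ‖∑ n ∈ Finset.range M, b n • e n‖ := by
    rw [key]
    calc ‖(∑ n ∈ Finset.range (p + 1), b n • e n) - ∑ n ∈ Finset.range p, b n • e n‖
        ≤ ‖∑ n ∈ Finset.range (p + 1), b n • e n‖ + ‖∑ n ∈ Finset.range p, b n • e n‖ :=
          norm_sub_le _ _
      _ ≤ 2 * B * ‖∑ n ∈ Finset.range M, b n • e n‖ := by linarith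
  have h4 : |b p| * d ≤ ‖b p • e p‖ := by
    rw [norm_smul, Real.norm_eq_abs]
    exact mul_le_mul_of_nonneg_left (hde p) (abs_nonneg _)
  linarith

lemma coeff_bound' (e : ℕ → X) (d B : ℝ) (hd : 0 < d) (hde : ∀ n, d ≤ ‖e n‖)
    (hB : ∀ (a : ℕ → ℝ) (m M : ℕ), m ≤ M →
      ‖∑ n ∈ Finset.range m, a n • e n‖ ≤ B * ‖∑ n ∈ Finset.range M, a n • e n‖)
    (j : ℕ → ℕ) (hj : Function.Injective j) (a : ℕ → ℝ) (F : Finset ℕ)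
    (n : ℕ) (hn : n ∈ F) :
    |a n| * d ≤ 2 * B * ‖∑ m ∈ F, a m • e (j m)‖ := by
  set M := F.sup j + 1 with hM
  have hjM : ∀ m ∈ F, j m ∈ Finset.range M := by
    intro m hm
    simp only [Finset.mem_range, hM]
    exact Nat.lt_succ_of_le (Finset.le_sup hm)
  set b : ℕ → ℝ := fun i => ∑ m ∈ F.filter (fun m => j m = i), a m with hb
  have claim1 : ∑ i ∈ Finset.range M, b i • e i = ∑ m ∈ F, a m • e (j m) := by
    rw [← Finset.sum_fiberwise_of_maps_to hjM (fun m => a m • e (j m))]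
    refine Finset.sum_congr rfl fun i _ => ?_
    rw [hb, Finset.sum_smul]
    refine Finset.sum_congr rfl fun m hm => ?_
    rw [(Finset.mem_filter.mp hm).2]
  have claim2 : b (j n) = a n := by
    have : F.filter (fun m => j m = j n) = {n} := by
      ext m
      simp only [Finset.mem_filter, Finset.mem_singleton]
      constructor
      · rintro ⟨_, h⟩; exact hj h
      · rintro rfl; exact ⟨hn, rfl⟩
    rw [hb]; simp [this]
  have := coeff_bound e d B hd hde hB b M (j n) (Finset.mem_range.mp (hjM n hn))
  rw [claim2, claim1] at this
  exact this

/-- Extension of the increasing enumeration of `F` to a strictly monotone map on `ℕ`. -/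
noncomputable def extIdx (F : Finset ℕ) : ℕ → ℕ := fun i =>
  if h : i < F.card then F.orderEmbOfFin rfl ⟨i, h⟩ else F.sup id + 1 + (i - F.card)

lemma extIdx_mem (F : Finset ℕ) (i : ℕ) (h : i < F.card) : extIdx F i ∈ F := by
  rw [extIdx, dif_pos h]
  exact Finset.orderEmbOfFin_mem F rfl _

lemma extIdx_strictMono (F : Finset ℕ) : StrictMono (extIdx F) := by
  intro i j hij
  unfold extIdx
  by_cases hi : i < F.card
  · by_cases hjc : j < F.card
    · rw [dif_pos hi, dif_pos hjc]
      exact (F.orderEmbOfFin rfl).strictMono (by exact hij)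
    · rw [dif_pos hi, dif_neg hjc]
      have h1 : (F.orderEmbOfFin rfl ⟨i, hi⟩ : ℕ) ≤ F.sup id :=
        Finset.le_sup (f := id) (Finset.orderEmbOfFin_mem F rfl _)
      omega
  · have hjc : ¬ j < F.card := by omega
    rw [dif_neg hi, dif_neg hjc]
    omega

lemma sum_extIdx {M : Type*} [AddCommMonoid M] (F : Finset ℕ) (g : ℕ → M) :
    ∑ n ∈ F, g n = ∑ i ∈ Finset.range F.card, g (extIdx F i) := by
  have himg : (Finset.range F.card).image (extIdx F) = F := by
    apply Finset.eq_of_subset_of_card_le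
    · intro n hn
      obtain ⟨i, hi, rfl⟩ := Finset.mem_image.mp hn
      exact extIdx_mem F i (Finset.mem_range.mp hi)
    · rw [Finset.card_image_of_injective _ (extIdx_strictMono F).injective,
        Finset.card_range]
  conv_lhs => rw [← himg]
  rw [Finset.sum_image (fun i _ j _ h => (extIdx_strictMono F).injective h)]

lemma caseB (e : ℕ → X) (hqss : QuasiSubsymmetric e)
    (hcex : ∀ R j : ℕ, ∃ (k l : ℕ → ℕ) (a : ℕ → ℝ) (c : ℕ),
      StrictMono k ∧ StrictMono l ∧ (∀ n, k n ≤ l n) ∧ R ≤ k 0 ∧ 1 ≤ c ∧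
      (j + 1 : ℝ) * ‖∑ n ∈ Finset.range c, a n • e (k n)‖ <
        ‖∑ n ∈ Finset.range c, a n • e (l n)‖) : False := by
  choose K L A C hK hL hKL hR hc hlt using hcex
  set Rs : ℕ → ℕ := fun j => Nat.rec 0 (fun j Rj => L Rj j (C Rj j - 1) + 1) j with hRsdef
  set kk : ℕ → ℕ → ℕ := fun j => K (Rs j) j with hkk
  set ll : ℕ → ℕ → ℕ := fun j => L (Rs j) j with hll
  set aa : ℕ → ℕ → ℝ := fun j => A (Rs j) j with haa
  set cc : ℕ → ℕ := fun j => C (Rs j) j with hcc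
  have hRs : ∀ j, Rs (j + 1) = ll j (cc j - 1) + 1 := fun j => rfl
  have hkkm : ∀ j, StrictMono (kk j) := fun j => hK _ _
  have hllm : ∀ j, StrictMono (ll j) := fun j => hL _ _
  have hkl : ∀ j n, kk j n ≤ ll j n := fun j n => hKL _ _ n
  have hc1 : ∀ j, 1 ≤ cc j := fun j => hc _ _
  have hjump : ∀ j, ll j (cc j - 1) < kk (j + 1) 0 := by
    intro j
    have h1 : Rs (j + 1) ≤ kk (j + 1) 0 := hR _ _
    have h2 := hRs j
    omega
  set SS : ℕ → ℕ := fun j => ∑ i ∈ Finset.range j, cc i with hSSdef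
  have hSS0 : SS 0 = 0 := by simp [hSSdef]
  have hSSsucc : ∀ j, SS (j + 1) = SS j + cc j := fun j => Finset.sum_range_succ _ _
  have hSSmono : StrictMono SS := strictMono_nat_of_lt_succ fun j => by
    rw [hSSsucc]; have := hc1 j; omega
  have hSSle : ∀ j, j ≤ SS j := fun j => hSSmono.le_apply
  set blk : ℕ → ℕ := fun n => Nat.findGreatest (fun j => SS j ≤ n) n with hblkdef
  have hblk1 : ∀ n, SS (blk n) ≤ n := by
    intro n
    have h0 : SS 0 ≤ n := le_trans (le_of_eq hSS0) (Nat.zero_le n)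
    exact Nat.findGreatest_spec (P := fun j => SS j ≤ n) (Nat.zero_le n) h0
  have hblk2 : ∀ n, n < SS (blk n + 1) := by
    intro n
    by_contra h
    push_neg at h
    exact Nat.findGreatest_is_greatest (P := fun j => SS j ≤ n)
      (Nat.lt_succ_self _) (le_trans (hSSle _) h) h
  have hblk_eq : ∀ j n, SS j ≤ n → n < SS (j + 1) → blk n = j := by
    intro j n h1 h2
    have hge : j ≤ blk n :=
      Nat.le_findGreatest (P := fun m => SS m ≤ n) (le_trans (hSSle j) h1) h1
    have hle : blk n ≤ j := by
      by_contra h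
      push_neg at h
      have := hSSmono.monotone (show j + 1 ≤ blk n from h)
      have := hblk1 n
      omega
    omega
  set KK : ℕ → ℕ := fun n => kk (blk n) (n - SS (blk n)) with hKKdef
  set LL : ℕ → ℕ := fun n => ll (blk n) (n - SS (blk n)) with hLLdef
  have hKKval : ∀ j i, i < cc j → KK (SS j + i) = kk j i := by
    intro j i hi
    have hb : blk (SS j + i) = j :=
      hblk_eq j _ (Nat.le_add_right _ _) (by rw [hSSsucc]; omega)
    rw [hKKdef]; simp only [hb]
    congr 1
    omega
  have hLLval : ∀ j i, i < cc j → LL (SS j + i) = ll j i := by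
    intro j i hi
    have hb : blk (SS j + i) = j :=
      hblk_eq j _ (Nat.le_add_right _ _) (by rw [hSSsucc]; omega)
    rw [hLLdef]; simp only [hb]
    congr 1
    omega
  have hstep : ∀ n, KK n < KK (n + 1) ∧ LL n < LL (n + 1) := by
    intro n
    set j := blk n with hj
    have h1 : SS j ≤ n := hblk1 n
    have h2 : n < SS (j + 1) := hblk2 n
    by_cases hcase : n + 1 < SS (j + 1)
    · have hb : blk (n + 1) = j := hblk_eq j _ (by omega) hcase
      rw [hKKdef, hLLdef]
      simp only [hb, ← hj]
      have harg : n - SS j < n + 1 - SS j := by omega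
      exact ⟨hkkm j harg, hllm j harg⟩
    · have hn1 : n + 1 = SS (j + 1) := by omega
      have hb : blk (n + 1) = j + 1 := by
        apply hblk_eq
        · omega
        · rw [hSSsucc (j + 1)]; have := hc1 (j + 1); omega
      have harg : n - SS j = cc j - 1 := by
        rw [hSSsucc] at hn1; omega
      have harg2 : n + 1 - SS (j + 1) = 0 := by omega
      rw [hKKdef, hLLdef]
      simp only [hb, ← hj, harg, harg2]
      have hj1 := hjump j
      have hk1 : kk j (cc j - 1) ≤ ll j (cc j - 1) := hkl j _
      have hk2 : kk (j + 1) 0 ≤ ll (j + 1) 0 := hkl (j + 1) 0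
      exact ⟨by omega, by omega⟩
  have hKKm : StrictMono KK := strictMono_nat_of_lt_succ fun n => (hstep n).1
  have hLLm : StrictMono LL := strictMono_nat_of_lt_succ fun n => (hstep n).2
  have hKKLL : ∀ n, KK n ≤ LL n := fun n => hkl _ _
  obtain ⟨Cst, hCst, hdom⟩ := hqss KK LL hKKm hLLm hKKLL
  obtain ⟨j, hjge⟩ := exists_nat_ge Cst
  have happ := hdom (fun n => aa j (n - SS j)) (Finset.Ico (SS j) (SS j + cc j))
  have hsumL : ∑ n ∈ Finset.Ico (SS j) (SS j + cc j), aa j (n - SS j) • e (LL n) =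
      ∑ i ∈ Finset.range (cc j), aa j i • e (ll j i) := by
    rw [Finset.sum_Ico_eq_sum_range]
    have hc' : SS j + cc j - SS j = cc j := by omega
    rw [hc']
    refine Finset.sum_congr rfl fun i hi => ?_
    have hi' := Finset.mem_range.mp hi
    rw [hLLval j i hi']
    congr 2
    omega
  have hsumK : ∑ n ∈ Finset.Ico (SS j) (SS j + cc j), aa j (n - SS j) • e (KK n) =
      ∑ i ∈ Finset.range (cc j), aa j i • e (kk j i) := by
    rw [Finset.sum_Ico_eq_sum_range]
    have hc' : SS j + cc j - SS j = cc j := by omega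
    rw [hc']
    refine Finset.sum_congr rfl fun i hi => ?_
    have hi' := Finset.mem_range.mp hi
    rw [hKKval j i hi']
    congr 2
    omega
  rw [hsumL, hsumK] at happ
  have hlt' : (j + 1 : ℝ) * ‖∑ i ∈ Finset.range (cc j), aa j i • e (kk j i)‖ <
      ‖∑ i ∈ Finset.range (cc j), aa j i • e (ll j i)‖ := hlt (Rs j) j
  have hNnn : (0:ℝ) ≤ ‖∑ i ∈ Finset.range (cc j), aa j i • e (kk j i)‖ := norm_nonneg _
  have hCj : Cst * ‖∑ i ∈ Finset.range (cc j), aa j i • e (kk j i)‖ ≤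
      (j + 1 : ℝ) * ‖∑ i ∈ Finset.range (cc j), aa j i • e (kk j i)‖ := by
    apply mul_le_mul_of_nonneg_right _ hNnn
    linarith
  exact absurd (lt_of_lt_of_le hlt' (le_trans happ hCj)) (lt_irrefl _)

end Aux2

/-- **Lemma 2.2.** A seminormalized quasisubsymmetric basic sequence admits a
uniform quasisubsymmetry constant `S > 0`. -/
theorem uniform_quasisubsymmetry_constant
    {X : Type*} [NormedAddCommGroup X] [NormedSpace ℝ X] [CompleteSpace X]
    (e : ℕ → X) (hbasic : IsBasicSeq e) (hsemi : Seminormalized e)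
    (hqss : QuasiSubsymmetric e) :
    ∃ S : ℝ, 0 < S ∧ ∀ k l : ℕ → ℕ, StrictMono k → StrictMono l →
      (∀ n, k n ≤ l n) → ∀ (a : ℕ → ℝ) (F : Finset ℕ),
        ‖∑ n ∈ F, a n • e (l n)‖ ≤ S * ‖∑ n ∈ F, a n • e (k n)‖ := by
  obtain ⟨hnz, B, hB1, hB⟩ := hbasic
  obtain ⟨d, D, hd, hdD⟩ := hsemi
  have hde : ∀ n, d ≤ ‖e n‖ := fun n => (hdD n).1
  have hDe : ∀ n, ‖e n‖ ≤ D := fun n => (hdD n).2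
  have hD0 : 0 < D := lt_of_lt_of_le hd (le_trans (hde 0) (hDe 0))
  have hB0 : 0 < B := lt_of_lt_of_le one_pos hB1
  set c₀ : ℝ := 2 * B / d with hc₀def
  have hc₀ : 0 ≤ c₀ := by positivity
  have hcoef : ∀ (j : ℕ → ℕ), Function.Injective j → ∀ (a : ℕ → ℝ) (F : Finset ℕ),
      ∀ n ∈ F, |a n| ≤ c₀ * ‖∑ m ∈ F, a m • e (j m)‖ := by
    intro j hj a F n hn
    have h := coeff_bound' e d B hd hde hB j hj a F n hn
    rw [hc₀def, div_mul_eq_mul_div, le_div_iff₀ hd]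
    linarith
  by_cases hA : ∃ (R : ℕ) (m : ℝ), 0 < m ∧ ∀ k l : ℕ → ℕ, StrictMono k →
      StrictMono l → (∀ n, k n ≤ l n) → R ≤ k 0 → ∀ (a : ℕ → ℝ) (F : Finset ℕ),
      ‖∑ n ∈ F, a n • e (l n)‖ ≤ m * ‖∑ n ∈ F, a n • e (k n)‖
  · obtain ⟨R, m, hm, hQ⟩ := hA
    refine ⟨R * c₀ * D + m * (1 + R * c₀ * D), ?_, ?_⟩
    · have h1 : (0:ℝ) ≤ (R:ℝ) * c₀ * D := by positivity
      nlinarith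
    intro k l hk hl hkl a F
    set F₁ := F.filter (fun n => k n < R) with hF₁
    set F₂ := F.filter (fun n => ¬ k n < R) with hF₂
    have hN0 : (0:ℝ) ≤ ‖∑ n ∈ F, a n • e (k n)‖ := norm_nonneg _
    have habound : ∀ n ∈ F, |a n| ≤ c₀ * ‖∑ n ∈ F, a n • e (k n)‖ :=
      hcoef k hk.injective a F
    have hF₁card : (F₁.card : ℝ) ≤ R := by
      have hsub : F₁ ⊆ Finset.range R := by
        intro n hn
        rw [hF₁, Finset.mem_filter] at hn
        have h4 : n ≤ k n := hk.le_apply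
        rw [Finset.mem_range]
        omega
      have := Finset.card_le_card hsub
      rw [Finset.card_range] at this
      exact_mod_cast this
    have hsum1 : ∀ (j : ℕ → ℕ), ‖∑ n ∈ F₁, a n • e (j n)‖ ≤
        R * c₀ * D * ‖∑ n ∈ F, a n • e (k n)‖ := by
      intro j
      calc ‖∑ n ∈ F₁, a n • e (j n)‖ ≤ ∑ n ∈ F₁, ‖a n • e (j n)‖ :=
            norm_sum_le _ _
        _ ≤ ∑ n ∈ F₁, (c₀ * ‖∑ n ∈ F, a n • e (k n)‖) * D := by
            refine Finset.sum_le_sum fun n hn => ?_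
            rw [norm_smul, Real.norm_eq_abs]
            have h1 : |a n| ≤ c₀ * ‖∑ n ∈ F, a n • e (k n)‖ :=
              habound n (Finset.filter_subset _ _ hn)
            have h2 : ‖e (j n)‖ ≤ D := hDe _
            have h3 := abs_nonneg (a n)
            nlinarith [norm_nonneg (e (j n))]
        _ = F₁.card * ((c₀ * ‖∑ n ∈ F, a n • e (k n)‖) * D) := by
            rw [Finset.sum_const, nsmul_eq_mul]
        _ ≤ R * ((c₀ * ‖∑ n ∈ F, a n • e (k n)‖) * D) := by
            apply mul_le_mul_of_nonneg_right hF₁card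
            positivity
        _ = R * c₀ * D * ‖∑ n ∈ F, a n • e (k n)‖ := by ring
    have hsplitk : ∑ n ∈ F₁, a n • e (k n) + ∑ n ∈ F₂, a n • e (k n) =
        ∑ n ∈ F, a n • e (k n) := Finset.sum_filter_add_sum_filter_not F _ _
    have hsplitl : ∑ n ∈ F₁, a n • e (l n) + ∑ n ∈ F₂, a n • e (l n) =
        ∑ n ∈ F, a n • e (l n) := Finset.sum_filter_add_sum_filter_not F _ _
    have h2 : ‖∑ n ∈ F₂, a n • e (l n)‖ ≤
        m * (‖∑ n ∈ F, a n • e (k n)‖ + R * c₀ * D * ‖∑ n ∈ F, a n • e (k n)‖) := by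
      have hF₂k : ‖∑ n ∈ F₂, a n • e (k n)‖ ≤
          ‖∑ n ∈ F, a n • e (k n)‖ + R * c₀ * D * ‖∑ n ∈ F, a n • e (k n)‖ := by
        have hrw : ∑ n ∈ F₂, a n • e (k n) =
            (∑ n ∈ F, a n • e (k n)) - ∑ n ∈ F₁, a n • e (k n) := by
          rw [← hsplitk]; abel
        rw [hrw]
        calc ‖(∑ n ∈ F, a n • e (k n)) - ∑ n ∈ F₁, a n • e (k n)‖
            ≤ ‖∑ n ∈ F, a n • e (k n)‖ + ‖∑ n ∈ F₁, a n • e (k n)‖ := norm_sub_le _ _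
          _ ≤ _ := by have := hsum1 k; linarith
      rcases F₂.eq_empty_or_nonempty with hemp | hne
      · rw [hemp]
        simp only [Finset.sum_empty, norm_zero]
        have h1 : (0:ℝ) ≤ (R:ℝ) * c₀ * D * ‖∑ n ∈ F, a n • e (k n)‖ := by positivity
        nlinarith
      · have hcard : 0 < F₂.card := Finset.card_pos.mpr hne
        have hmem0 : extIdx F₂ 0 ∈ F₂ := extIdx_mem F₂ 0 hcard
        have hR0 : R ≤ (k ∘ extIdx F₂) 0 := by
          have h := hmem0
          rw [hF₂, Finset.mem_filter] at h
          show R ≤ k (extIdx F₂ 0)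
          rw [hF₂]
          omega
        have hQapp := hQ (k ∘ extIdx F₂) (l ∘ extIdx F₂)
          (hk.comp (extIdx_strictMono F₂)) (hl.comp (extIdx_strictMono F₂))
          (fun n => hkl _) hR0 (a ∘ extIdx F₂) (Finset.range F₂.card)
        have eL : ∑ i ∈ Finset.range F₂.card,
            (a ∘ extIdx F₂) i • e ((l ∘ extIdx F₂) i) = ∑ n ∈ F₂, a n • e (l n) :=
          (sum_extIdx F₂ fun n => a n • e (l n)).symm
        have eK : ∑ i ∈ Finset.range F₂.card,
            (a ∘ extIdx F₂) i • e ((k ∘ extIdx F₂) i) = ∑ n ∈ F₂, a n • e (k n) :=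
          (sum_extIdx F₂ fun n => a n • e (k n)).symm
        rw [eL, eK] at hQapp
        calc ‖∑ n ∈ F₂, a n • e (l n)‖ ≤ m * ‖∑ n ∈ F₂, a n • e (k n)‖ := hQapp
          _ ≤ _ := mul_le_mul_of_nonneg_left hF₂k hm.le
    calc ‖∑ n ∈ F, a n • e (l n)‖
        = ‖∑ n ∈ F₁, a n • e (l n) + ∑ n ∈ F₂, a n • e (l n)‖ := by rw [hsplitl]
      _ ≤ ‖∑ n ∈ F₁, a n • e (l n)‖ + ‖∑ n ∈ F₂, a n • e (l n)‖ := norm_add_le _ _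
      _ ≤ R * c₀ * D * ‖∑ n ∈ F, a n • e (k n)‖ +
          m * (‖∑ n ∈ F, a n • e (k n)‖ + R * c₀ * D * ‖∑ n ∈ F, a n • e (k n)‖) :=
            add_le_add (hsum1 l) h2
      _ = (R * c₀ * D + m * (1 + R * c₀ * D)) * ‖∑ n ∈ F, a n • e (k n)‖ := by ring
  · exfalso
    push_neg at hA
    have hcex : ∀ R j : ℕ, ∃ (k l : ℕ → ℕ) (a : ℕ → ℝ) (c : ℕ),
        StrictMono k ∧ StrictMono l ∧ (∀ n, k n ≤ l n) ∧ R ≤ k 0 ∧ 1 ≤ c ∧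
        (j + 1 : ℝ) * ‖∑ n ∈ Finset.range c, a n • e (k n)‖ <
          ‖∑ n ∈ Finset.range c, a n • e (l n)‖ := by
      intro R j
      obtain ⟨k, l, hk, hl, hkl, hR0, a, F, hlt⟩ := hA R ((j:ℝ) + 1) (by positivity)
      have hFne : F.Nonempty := by
        rcases F.eq_empty_or_nonempty with rfl | hne
        · exfalso
          simp only [Finset.sum_empty, norm_zero, mul_zero] at hlt
          exact lt_irrefl _ hlt
        · exact hne
      refine ⟨k ∘ extIdx F, l ∘ extIdx F, a ∘ extIdx F, F.card,
        hk.comp (extIdx_strictMono F), hl.comp (extIdx_strictMono F),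
        fun n => hkl _, le_trans hR0 (hk.monotone (Nat.zero_le _)),
        Finset.card_pos.mpr hFne, ?_⟩
      have eL : ∑ i ∈ Finset.range F.card,
          (a ∘ extIdx F) i • e ((l ∘ extIdx F) i) = ∑ n ∈ F, a n • e (l n) :=
        (sum_extIdx F fun n => a n • e (l n)).symm
      have eK : ∑ i ∈ Finset.range F.card,
          (a ∘ extIdx F) i • e ((k ∘ extIdx F) i) = ∑ n ∈ F, a n • e (k n) :=
        (sum_extIdx F fun n => a n • e (k n)).symm
      rw [eL, eK]
      exact hlt
    exact caseB e hqss hcex
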